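/- (Normal biased-data example: marginal δ-SMI posterior for φ.) Let n, m ≥ 1, σ_y, σ_z, σ_θ > 0, δ ≥ 0, data Y₁,…,Y_n, Z₁,…,Z_m ∈ ℝ with means Ȳ, Z̄. Set λ := (m/σ_z²)/(m/σ_z² + n/(σ_y² + δ² + nσ_θ²)), μ_δ := λZ̄ + (1 − λ)Ȳ and σ_δ² := λσ_z²/m. Then there exists a constant c > 0 (not depending on φ) such that for every φ ∈ ℝ: [∏_{j=1}^{m} gaussianPDF(φ, σ_z², Z_j)] · ∫_ℝ [∏_{i=1}^{n} gaussianPDF(φ + θ̃, σ_y² + δ², Yᵢ)] · gaussianPDF(0, σ_θ², θ̃) dθ̃ = c · gaussianPDF(μ_δ, σ_δ², φ). -/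

import Mathlib

open MeasureTheory Real

/-- The density at `x` of the normal distribution with mean `m` and variance `v`. -/
noncomputable def gaussianPDF (m v x : ℝ) : ℝ :=
  (Real.sqrt (2 * Real.pi * v))⁻¹ * Real.exp (-((x - m) ^ 2) / (2 * v))

lemma gauss_int (a b c : ℝ) (ha : 0 < a) :
    ∫ x : ℝ, Real.exp (-(a*x^2 + b*x + c)) =
      Real.sqrt (Real.pi / a) * Real.exp (b^2/(4*a) - c) := by
  have h : ∀ x : ℝ, Real.exp (-(a*x^2 + b*x + c)) =
      Real.exp (-a * (x + b/(2*a))^2) * Real.exp (b^2/(4*a) - c) := by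
    intro x
    rw [← Real.exp_add]
    congr 1
    field_simp
    ring
  simp_rw [h]
  rw [integral_mul_const]
  congr 1
  rw [← integral_gaussian a]
  exact integral_add_right_eq_self (fun x => Real.exp (-a * x^2)) (b/(2*a))

lemma sum_sq {ι : Type*} (s : Finset ι) (f : ι → ℝ) (t : ℝ) :
    ∑ i ∈ s, (f i - t)^2 =
      (∑ i ∈ s, f i^2) - 2*t*(∑ i ∈ s, f i) + s.card * t^2 := by
  have h : ∀ x, (f x - t)^2 = f x^2 - (2*t) * f x + t^2 := fun x => by ring
  simp_rw [h]
  rw [Finset.sum_add_distrib, Finset.sum_sub_distrib, ← Finset.mul_sum, Finset.sum_const,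
    nsmul_eq_mul]

set_option maxHeartbeats 2000000 in
lemma alg_identity (n m σz σθ vy SY SY2 SZ SZ2 φ : ℝ)
    (hn0 : 0 < n) (hm0 : 0 < m) (hσz : σz ≠ 0) (hσθ : σθ ≠ 0) (hvy : 0 < vy) :
    -(SZ2 - 2*φ*SZ + m*φ^2)/(2*σz^2)
      + (((n*φ - SY)/vy)^2/(4*(n/(2*vy) + 1/(2*σθ^2)))
          - (SY2 - 2*φ*SY + n*φ^2)/(2*vy))
    = (-SZ2/(2*σz^2) + SY^2/(4*(n/(2*vy) + 1/(2*σθ^2))*vy^2) - SY2/(2*vy)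
      + ((m/σz^2/(m/σz^2 + n/(vy + n*σθ^2)))*(m⁻¹*SZ)
          + (1 - m/σz^2/(m/σz^2 + n/(vy + n*σθ^2)))*(n⁻¹*SY))^2
        / (2*(m/σz^2/(m/σz^2 + n/(vy + n*σθ^2))*σz^2/m)))
      + -(φ - ((m/σz^2/(m/σz^2 + n/(vy + n*σθ^2)))*(m⁻¹*SZ)
          + (1 - m/σz^2/(m/σz^2 + n/(vy + n*σθ^2)))*(n⁻¹*SY)))^2
        / (2*(m/σz^2/(m/σz^2 + n/(vy + n*σθ^2))*σz^2/m)) := by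
  have hW : vy + n*σθ^2 ≠ 0 := by positivity
  have ha : (n/(2*vy) + 1/(2*σθ^2)) ≠ 0 := by positivity
  have hD : (m/σz^2 + n/(vy + n*σθ^2)) ≠ 0 := by positivity
  have hl : (m/σz^2/(m/σz^2 + n/(vy + n*σθ^2))) ≠ 0 := by positivity
  field_simp
  ring

set_option maxHeartbeats 2000000 in
theorem biased_data_marginal_delta_smi_posterior_phi
    (n m : ℕ) (hn : 1 ≤ n) (hm : 1 ≤ m)
    (σy σz σθ δ : ℝ) (hσy : 0 < σy) (hσz : 0 < σz) (hσθ : 0 < σθ) (hδ : 0 ≤ δ)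
    (Y : Fin n → ℝ) (Z : Fin m → ℝ)
    (Ybar : ℝ) (hYbar : Ybar = (n : ℝ)⁻¹ * ∑ i, Y i)
    (Zbar : ℝ) (hZbar : Zbar = (m : ℝ)⁻¹ * ∑ j, Z j)
    (lam : ℝ)
    (hlam : lam = ((m : ℝ) / σz ^ 2) /
      ((m : ℝ) / σz ^ 2 + (n : ℝ) / (σy ^ 2 + δ ^ 2 + (n : ℝ) * σθ ^ 2)))
    (μδ : ℝ) (hμδ : μδ = lam * Zbar + (1 - lam) * Ybar)
    (σδsq : ℝ) (hσδsq : σδsq = lam * σz ^ 2 / (m : ℝ)) :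
    ∃ c : ℝ, 0 < c ∧ ∀ φ : ℝ,
      (∏ j, gaussianPDF φ (σz ^ 2) (Z j)) *
        (∫ θt : ℝ,
          (∏ i, gaussianPDF (φ + θt) (σy ^ 2 + δ ^ 2) (Y i)) *
            gaussianPDF 0 (σθ ^ 2) θt)
        = c * gaussianPDF μδ σδsq φ := by
  have hn0 : (0:ℝ) < n := by exact_mod_cast hn
  have hm0 : (0:ℝ) < m := by exact_mod_cast hm
  set vy : ℝ := σy ^ 2 + δ ^ 2 with hvy_def
  have hvy : 0 < vy := by positivity
  set SY : ℝ := ∑ i, Y i with hSY_def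
  set SY2 : ℝ := ∑ i, (Y i)^2 with hSY2_def
  set SZ : ℝ := ∑ j, Z j with hSZ_def
  set SZ2 : ℝ := ∑ j, (Z j)^2 with hSZ2_def
  set a : ℝ := (n:ℝ)/(2*vy) + 1/(2*σθ^2) with ha_def
  have ha : 0 < a := by positivity
  have hlam0 : 0 < lam := by
    rw [hlam]
    have h1 : 0 < (m : ℝ) / σz ^ 2 := div_pos hm0 (by positivity)
    have h2 : 0 < (n : ℝ) / (vy + (n : ℝ) * σθ ^ 2) := div_pos hn0 (by positivity)
    exact div_pos h1 (by linarith)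
  have hσδ : 0 < σδsq := by
    rw [hσδsq]; exact div_pos (by positivity) hm0
  set CZ : ℝ := (Real.sqrt (2*Real.pi*σz^2))⁻¹ ^ m with hCZ_def
  set CY : ℝ := (Real.sqrt (2*Real.pi*vy))⁻¹ ^ n with hCY_def
  set Cθ : ℝ := (Real.sqrt (2*Real.pi*σθ^2))⁻¹ with hCθ_def
  set K : ℝ := -SZ2/(2*σz^2) + SY^2/(4*a*vy^2) - SY2/(2*vy) + μδ^2/(2*σδsq) with hK_def
  refine ⟨CZ * CY * Cθ * Real.sqrt (Real.pi/a) * Real.sqrt (2*Real.pi*σδsq) * Real.exp K,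
    by positivity, fun φ => ?_⟩
  have hZprod : ∏ j, gaussianPDF φ (σz^2) (Z j)
      = CZ * Real.exp (-(SZ2 - 2*φ*SZ + m*φ^2)/(2*σz^2)) := by
    unfold gaussianPDF
    rw [Finset.prod_mul_distrib, Finset.prod_const, Finset.card_univ, Fintype.card_fin,
      ← Real.exp_sum]
    congr 1
    simp only [neg_div]
    rw [Finset.sum_neg_distrib, ← Finset.sum_div, sum_sq]
    simp only [Finset.card_univ, Fintype.card_fin]
    rfl
  have hint : ∀ θ : ℝ, (∏ i, gaussianPDF (φ+θ) vy (Y i)) * gaussianPDF 0 (σθ^2) θ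
      = (CY * Cθ) * Real.exp (-(a*θ^2 + (((n:ℝ)*φ - SY)/vy)*θ
          + (SY2 - 2*φ*SY + (n:ℝ)*φ^2)/(2*vy))) := by
    intro θ
    unfold gaussianPDF
    rw [Finset.prod_mul_distrib, Finset.prod_const, Finset.card_univ, Fintype.card_fin,
      ← Real.exp_sum]
    have hs : ∑ i, -((Y i - (φ+θ))^2)/(2*vy) = -(SY2 - 2*(φ+θ)*SY + (n:ℝ)*(φ+θ)^2)/(2*vy) := by
      simp only [neg_div]
      rw [Finset.sum_neg_distrib, ← Finset.sum_div, sum_sq]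
      simp only [Finset.card_univ, Fintype.card_fin]
      rfl
    simp only [neg_div] at hs ⊢
    rw [hs, show CY * Real.exp (-((SY2 - 2*(φ+θ)*SY + (n:ℝ)*(φ+θ)^2)/(2*vy)))
        * (Cθ * Real.exp (-((θ - 0)^2/(2*σθ^2))))
      = CY * Cθ * (Real.exp (-((SY2 - 2*(φ+θ)*SY + (n:ℝ)*(φ+θ)^2)/(2*vy)))
        * Real.exp (-((θ - 0)^2/(2*σθ^2)))) by ring, ← Real.exp_add]
    congr 1
    rw [ha_def]
    field_simp
    ring
  have hI : (∫ θ : ℝ, (∏ i, gaussianPDF (φ+θ) vy (Y i)) * gaussianPDF 0 (σθ^2) θ)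
      = (CY * Cθ) * (Real.sqrt (Real.pi/a)
        * Real.exp ((((n:ℝ)*φ - SY)/vy)^2/(4*a) - (SY2 - 2*φ*SY + (n:ℝ)*φ^2)/(2*vy))) := by
    simp_rw [hint]
    rw [integral_const_mul, gauss_int _ _ _ ha]
  rw [hZprod, hI]
  show _ = _ * gaussianPDF μδ σδsq φ
  unfold gaussianPDF
  have hsqδ : Real.sqrt (2*Real.pi*σδsq) ≠ 0 := ne_of_gt (Real.sqrt_pos.mpr (by positivity))
  have h1 : Real.sqrt (2*Real.pi*σδsq) * (Real.sqrt (2*Real.pi*σδsq))⁻¹ = 1 :=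
    mul_inv_cancel₀ hsqδ
  have hexp : Real.exp (-(SZ2 - 2*φ*SZ + m*φ^2)/(2*σz^2))
        * Real.exp ((((n:ℝ)*φ - SY)/vy)^2/(4*a) - (SY2 - 2*φ*SY + (n:ℝ)*φ^2)/(2*vy))
      = Real.exp K * Real.exp (-((φ - μδ)^2)/(2*σδsq)) := by
    rw [← Real.exp_add, ← Real.exp_add]
    congr 1
    rw [hK_def, ha_def, hμδ, hYbar, hZbar, hσδsq, hlam]
    exact alg_identity (n:ℝ) (m:ℝ) σz σθ vy SY SY2 SZ SZ2 φ hn0 hm0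
      (ne_of_gt hσz) (ne_of_gt hσθ) hvy
  linear_combination (CZ * CY * Cθ * Real.sqrt (Real.pi/a)) * hexp
    - (CZ * CY * Cθ * Real.sqrt (Real.pi/a) * Real.exp K
        * Real.exp (-((φ - μδ)^2)/(2*σδsq))) * h1
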